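/- arXiv:2509.08938 — 2 statements merged into one kernel-verified Lean document; each statement's English description precedes it below -/
import Mathlib

section
/- Let X be a real random variable with 𝔼[e^{2μX}] well-defined for all μ ≥ 0, |X| ≤ 1 almost surely, 𝔼[X] < 0, and ℙ[X > 0] > 0. Then there exists a unique μ > 0 such that 𝔼[e^{2μX}] = 1. -/
open MeasureTheory

private lemma exp_le_quad {y : ℝ} (hy : |y| ≤ 1) : Real.exp y ≤ 1 + y + 2 * y ^ 2 := by
  have h := Real.exp_bound hy (n := 2) (by norm_num)
  have hs : ∑ m ∈ Finset.range 2, y ^ m / m.factorial = 1 + y := by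
    simp [Finset.sum_range_succ]
  rw [hs] at h
  norm_num [Nat.factorial] at h
  have h2 := (abs_sub_le_iff.1 h).1
  have hsq : |y| ^ 2 = y ^ 2 := sq_abs y
  nlinarith [sq_nonneg y]

/-- For a bounded random variable `X` with negative mean and positive probability of being
positive, there is a unique `μ > 0` such that `𝔼[e^{2μX}] = 1`. -/
theorem exists_unique_exponential_root {Ω : Type*} [MeasurableSpace Ω] (P : Measure Ω)
    [IsProbabilityMeasure P] (X : Ω → ℝ) (hX : Measurable X)
    (hbdd : ∀ᵐ ω ∂P, |X ω| ≤ 1)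
    (hmean : (∫ ω, X ω ∂P) < 0)
    (hpos : 0 < P {ω | 0 < X ω}) :
    ∃! μ : ℝ, 0 < μ ∧ (∫ ω, Real.exp (2 * μ * X ω) ∂P) = 1 := by
  set f : ℝ → ℝ := fun μ => ∫ ω, Real.exp (2 * μ * X ω) ∂P with hf
  -- integrability of all the exponentials
  have hint : ∀ c : ℝ, Integrable (fun ω => Real.exp (c * X ω)) P := by
    intro c
    refine Integrable.mono' (integrable_const (Real.exp |c|)) ?_ ?_
    · exact (Real.continuous_exp.comp (continuous_const.mul continuous_id)).measurable.comp hX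
        |>.aestronglyMeasurable
    · filter_upwards [hbdd] with ω hω
      rw [Real.norm_eq_abs, abs_of_pos (Real.exp_pos _)]
      apply Real.exp_le_exp.2
      calc c * X ω ≤ |c * X ω| := le_abs_self _
        _ = |c| * |X ω| := abs_mul _ _
        _ ≤ |c| * 1 := by nlinarith [abs_nonneg c]
        _ = |c| := mul_one _
  have hintX : Integrable X P := by
    refine Integrable.mono' (integrable_const 1) hX.aestronglyMeasurable ?_
    filter_upwards [hbdd] with ω hω using by rwa [Real.norm_eq_abs]
  have hintX2 : Integrable (fun ω => X ω ^ 2) P := by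
    refine Integrable.mono' (integrable_const 1) (hX.pow_const 2).aestronglyMeasurable ?_
    filter_upwards [hbdd] with ω hω
    rw [Real.norm_eq_abs, abs_pow]
    calc |X ω| ^ 2 ≤ 1 ^ 2 := pow_le_pow_left₀ (abs_nonneg _) hω 2
      _ = 1 := one_pow 2
  have hf0 : f 0 = 1 := by
    simp [hf]
  -- key strict-convexity inequality
  have key : ∀ a b : ℝ, 0 < a → a < b → f b = 1 → f a < 1 := by
    intro a b ha hab hfb
    have hb : 0 < b := ha.trans hab
    set t : ℝ := a / b with ht
    have ht0 : 0 < t := div_pos ha hb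
    have ht1 : t < 1 := (div_lt_one hb).2 hab
    have hbne : b ≠ 0 := hb.ne'
    have harg : ∀ ω, t * (2 * b * X ω) = 2 * a * X ω := by
      intro ω; rw [ht]; field_simp
    have hle : ∀ ω, Real.exp (2 * a * X ω) ≤ (1 - t) + t * Real.exp (2 * b * X ω) := by
      intro ω
      have := convexOn_exp.2 (Set.mem_univ (0 : ℝ)) (Set.mem_univ (2 * b * X ω))
        (by linarith : (0:ℝ) ≤ 1 - t) ht0.le (by ring)
      simp only [smul_eq_mul, mul_zero, zero_add, Real.exp_zero, mul_one] at this
      rwa [harg ω] at this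
    have hlt : ∀ ω, 0 < X ω →
        Real.exp (2 * a * X ω) < (1 - t) + t * Real.exp (2 * b * X ω) := by
      intro ω hω
      have hne : (0 : ℝ) ≠ 2 * b * X ω := by positivity
      have := strictConvexOn_exp.2 (Set.mem_univ (0 : ℝ)) (Set.mem_univ (2 * b * X ω))
        hne (by linarith : (0:ℝ) < 1 - t) ht0 (by ring)
      simp only [smul_eq_mul, mul_zero, zero_add, Real.exp_zero, mul_one] at this
      rwa [harg ω] at this
    have hinth : Integrable (fun ω => (1 - t) + t * Real.exp (2 * b * X ω)) P :=
      (integrable_const _).add ((hint (2 * b)).const_mul t)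
    have hdiffpos : 0 < ∫ ω, ((1 - t) + t * Real.exp (2 * b * X ω)) - Real.exp (2 * a * X ω) ∂P := by
      rw [integral_pos_iff_support_of_nonneg_ae]
      · refine lt_of_lt_of_le hpos (measure_mono ?_)
        intro ω hω
        exact (sub_pos.2 (hlt ω hω)).ne'
      · exact Filter.Eventually.of_forall fun ω => sub_nonneg.2 (hle ω)
      · exact hinth.sub (hint (2 * a))
    rw [integral_sub hinth (hint (2 * a))] at hdiffpos
    have : ∫ ω, ((1 - t) + t * Real.exp (2 * b * X ω)) ∂P = 1 := by
      rw [integral_add (integrable_const _) ((hint (2 * b)).const_mul t),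
        integral_const, integral_const_mul]
      have hfb' : ∫ ω, Real.exp (2 * b * X ω) ∂P = 1 := hfb
      simp [hfb']
    rw [this] at hdiffpos
    linarith
  -- continuity of f
  have hcont : Continuous f := by
    rw [continuous_iff_continuousAt]
    intro μ₀
    apply continuousAt_of_dominated (bound := fun _ => Real.exp (2 * (|μ₀| + 1)))
    · exact Filter.Eventually.of_forall fun μ =>
        ((Real.continuous_exp.comp ((continuous_const.mul continuous_const).mul continuous_id)).measurable.comp hX).aestronglyMeasurable
    · have hev : ∀ᶠ μ in nhds μ₀, |μ| ≤ |μ₀| + 1 := by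
        have : Metric.ball μ₀ 1 ∈ nhds μ₀ := Metric.ball_mem_nhds _ one_pos
        filter_upwards [this] with μ hμ
        rw [Metric.mem_ball, Real.dist_eq] at hμ
        calc |μ| = |μ₀ + (μ - μ₀)| := by ring_nf
          _ ≤ |μ₀| + |μ - μ₀| := abs_add_le _ _
          _ ≤ |μ₀| + 1 := by linarith
      filter_upwards [hev] with μ hμ
      filter_upwards [hbdd] with ω hω
      rw [Real.norm_eq_abs, abs_of_pos (Real.exp_pos _)]
      apply Real.exp_le_exp.2
      calc 2 * μ * X ω ≤ |2 * μ * X ω| := le_abs_self _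
        _ = 2 * |μ| * |X ω| := by rw [abs_mul, abs_mul]; norm_num
        _ ≤ 2 * (|μ₀| + 1) * 1 := by
            apply mul_le_mul (by linarith) hω (abs_nonneg _) (by positivity)
        _ = 2 * (|μ₀| + 1) := mul_one _
    · exact integrable_const _
    · exact Filter.Eventually.of_forall fun ω =>
        (Real.continuous_exp.comp ((continuous_const.mul continuous_id).mul continuous_const)).continuousAt
  -- f is < 1 for some small positive μ₀
  set m : ℝ := ∫ ω, X ω ∂P with hm
  set μ₀ : ℝ := min (1/2) (-m/8) with hμ₀
  have hμ₀pos : 0 < μ₀ := lt_min (by norm_num) (by linarith)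
  have hμ₀half : μ₀ ≤ 1/2 := min_le_left _ _
  have hsmall : f μ₀ < 1 := by
    have hub : f μ₀ ≤ 1 + 2 * μ₀ * m + 8 * μ₀ ^ 2 * ∫ ω, X ω ^ 2 ∂P := by
      have h1 : f μ₀ ≤ ∫ ω, (1 + 2 * μ₀ * X ω + 8 * μ₀ ^ 2 * X ω ^ 2) ∂P := by
        apply integral_mono_ae (hint (2 * μ₀))
          (((integrable_const 1).add (hintX.const_mul _)).add (hintX2.const_mul _))
        filter_upwards [hbdd] with ω hω
        have habs : |2 * μ₀ * X ω| ≤ 1 := by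
          rw [abs_mul, abs_mul, abs_of_pos (by norm_num : (0:ℝ) < 2), abs_of_pos hμ₀pos]
          nlinarith [abs_nonneg (X ω)]
        have := exp_le_quad habs
        calc Real.exp (2 * μ₀ * X ω) ≤ 1 + 2 * μ₀ * X ω + 2 * (2 * μ₀ * X ω) ^ 2 := this
          _ = 1 + 2 * μ₀ * X ω + 8 * μ₀ ^ 2 * X ω ^ 2 := by ring
      have i1 : Integrable (fun ω => 1 + 2 * μ₀ * X ω) P :=
        (integrable_const 1).add (hintX.const_mul _)
      have i2 : Integrable (fun ω => 8 * μ₀ ^ 2 * X ω ^ 2) P := hintX2.const_mul _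
      have i0 : Integrable (fun _ : Ω => (1:ℝ)) P := integrable_const 1
      have i3 : Integrable (fun ω => 2 * μ₀ * X ω) P := hintX.const_mul _
      rw [integral_add i1 i2, integral_add i0 i3, integral_const,
        integral_const_mul, integral_const_mul] at h1
      simpa using h1
    have hX2le : ∫ ω, X ω ^ 2 ∂P ≤ 1 := by
      have := integral_mono_ae hintX2 (integrable_const 1) ?_
      · simpa using this
      · filter_upwards [hbdd] with ω hω
        calc X ω ^ 2 = |X ω| ^ 2 := (sq_abs _).symm
          _ ≤ 1 ^ 2 := pow_le_pow_left₀ (abs_nonneg _) hω 2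
          _ = 1 := one_pow 2
    have hX2nn : 0 ≤ ∫ ω, X ω ^ 2 ∂P := integral_nonneg fun ω => sq_nonneg _
    have hμ₀m : μ₀ ≤ -m/8 := min_le_right _ _
    nlinarith [sq_nonneg μ₀]
  -- f is > 1 for some large M
  obtain ⟨n, hn⟩ : ∃ n : ℕ, 0 < P {ω | 1/(n+1) < X ω} := by
    by_contra h
    push_neg at h
    simp only [le_zero_iff] at h
    have : P {ω | 0 < X ω} ≤ P (⋃ n : ℕ, {ω | 1/(n+1) < X ω}) := by
      apply measure_mono
      intro ω hω
      obtain ⟨n, hn⟩ := exists_nat_gt (1 / X ω)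
      refine Set.mem_iUnion.2 ⟨n, ?_⟩
      simp only [Set.mem_setOf_eq] at hω ⊢
      rw [div_lt_iff₀ (by positivity)]
      rw [div_lt_iff₀ hω] at hn
      nlinarith
    rw [measure_iUnion_null fun n => h n] at this
    exact hpos.not_ge this
  set ε : ℝ := 1/(n+1) with hε
  have hεpos : 0 < ε := by positivity
  set S : Set Ω := {ω | ε < X ω} with hS
  have hSmeas : MeasurableSet S := measurableSet_lt measurable_const hX
  set r : ℝ := (P S).toReal with hr
  have hrpos : 0 < r := ENNReal.toReal_pos hn.ne' (measure_ne_top P S)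
  set M : ℝ := max (μ₀ + 1) (Real.log (2/r) / (2 * ε)) with hM
  have hMμ₀ : μ₀ < M := lt_of_lt_of_le (by linarith) (le_max_left _ _)
  have hMpos : 0 < M := hμ₀pos.trans hMμ₀
  have hbig : 1 < f M := by
    have hlb : Real.exp (2 * M * ε) * r ≤ f M := by
      have hind : ∫ ω, S.indicator (fun _ => Real.exp (2 * M * ε)) ω ∂P
          = Real.exp (2 * M * ε) * r := by
        rw [integral_indicator_const _ hSmeas]
        simp [hr, mul_comm]
        rfl
      rw [← hind]
      apply integral_mono ((integrable_const _).indicator hSmeas) (hint (2 * M))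
      intro ω
      by_cases hω : ω ∈ S
      · rw [Set.indicator_of_mem hω]
        apply Real.exp_le_exp.2
        have : ε < X ω := hω
        nlinarith
      · rw [Set.indicator_of_notMem hω]
        exact (Real.exp_pos _).le
    have h2r : Real.exp (2 * M * ε) ≥ 2 / r := by
      have hlog : Real.log (2/r) ≤ 2 * M * ε := by
        have : Real.log (2/r) / (2 * ε) ≤ M := le_max_right _ _
        calc Real.log (2/r) = Real.log (2/r) / (2 * ε) * (2 * ε) := by
              field_simp
          _ ≤ M * (2 * ε) := by
              apply mul_le_mul_of_nonneg_right this (by positivity)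
          _ = 2 * M * ε := by ring
      calc 2 / r = Real.exp (Real.log (2/r)) := (Real.exp_log (by positivity)).symm
        _ ≤ Real.exp (2 * M * ε) := Real.exp_le_exp.2 hlog
    have : 2 ≤ Real.exp (2 * M * ε) * r := by
      rw [ge_iff_le, div_le_iff₀ hrpos] at h2r
      linarith
    linarith
  -- existence via IVT
  obtain ⟨μ, hμmem, hμroot⟩ : ∃ μ ∈ Set.Ioo μ₀ M, f μ = 1 := by
    have := intermediate_value_Ioo hMμ₀.le hcont.continuousOn (a := μ₀) (b := M)
    have h1 : (1 : ℝ) ∈ Set.Ioo (f μ₀) (f M) := ⟨hsmall, hbig⟩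
    obtain ⟨μ, hμ, hμ1⟩ := this h1
    exact ⟨μ, hμ, hμ1⟩
  refine ⟨μ, ⟨hμ₀pos.trans hμmem.1, hμroot⟩, ?_⟩
  rintro ν ⟨hνpos, hνroot⟩
  by_contra hne
  rcases lt_or_gt_of_ne hne with h | h
  · exact absurd hνroot (ne_of_lt (key ν μ hνpos h hμroot))
  · exact absurd hμroot (ne_of_lt (key μ ν (hμ₀pos.trans hμmem.1) h hνroot))
end

section
/- Let X be a real random variable with |X| ≤ 1 a.s., standard deviation σ = 𝔼[(X)²]^{1/2} ≤ 1, mean 𝔼[X] = -μ₀σ² + O(σ³) for a fixed constant μ₀ > 0, and tails ℙ[|X| > s] ≤ K exp(-c s/σ). If μ > 0 satisfies 𝔼[e^{2μX}] = 1 and μ ≤ C₀ for an absolute constant C₀, then μ = μ₀ + O(σ), with implied constants depending only on μ₀, c, K, C₀ and the O(σ³) constant. -/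
open MeasureTheory Set


lemma abs_le_of_mem_uIoc {s t : ℝ} (hs : s ∈ Set.uIoc 0 t) : |s| ≤ |t| := by
  rcases le_or_gt 0 t with h | h
  · rw [Set.uIoc_of_le h] at hs
    rw [abs_of_pos hs.1, abs_of_nonneg h]; exact hs.2
  · rw [Set.uIoc_of_ge h.le] at hs
    rw [abs_of_nonpos hs.2, abs_of_neg h]; exact neg_le_neg hs.1.le

lemma exp_taylor1 (s : ℝ) : |Real.exp s - 1| ≤ |s| * Real.exp |s| := by
  have l1 := Real.add_one_le_exp s
  have l2 := Real.add_one_le_exp (-s)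
  have hp := Real.exp_pos s
  have hle : Real.exp s ≤ Real.exp |s| := Real.exp_le_exp.2 (le_abs_self s)
  have h1 : 1 ≤ Real.exp |s| := Real.one_le_exp (abs_nonneg s)
  have hmul : Real.exp (-s) * Real.exp s = 1 := by
    rw [← Real.exp_add]; simp
  have k : (1 - s) * Real.exp s ≤ 1 := by
    have := mul_le_mul_of_nonneg_right l2 hp.le
    nlinarith
  rw [abs_le]
  constructor
  · nlinarith [neg_abs_le s, abs_nonneg s]
  · nlinarith [le_abs_self s, abs_nonneg s]

lemma exp_taylor2 (t : ℝ) : |Real.exp t - 1 - t| ≤ t ^ 2 * Real.exp |t| := by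
  have key : Real.exp t - 1 - t = ∫ s in (0:ℝ)..t, (Real.exp s - 1) := by
    rw [intervalIntegral.integral_sub (Real.continuous_exp.intervalIntegrable 0 t)
      (intervalIntegrable_const), integral_exp, intervalIntegral.integral_const]
    simp
  have bound : ∀ x ∈ Set.uIoc (0:ℝ) t, ‖Real.exp x - 1‖ ≤ |t| * Real.exp |t| := by
    intro s hs
    have h2 := abs_le_of_mem_uIoc hs
    calc ‖Real.exp s - 1‖ ≤ |s| * Real.exp |s| := exp_taylor1 s
      _ ≤ |t| * Real.exp |t| :=
        mul_le_mul h2 (Real.exp_le_exp.2 h2) (Real.exp_pos _).le (abs_nonneg _)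
  have h := intervalIntegral.norm_integral_le_of_norm_le_const bound
  rw [key, ← Real.norm_eq_abs]
  calc ‖∫ s in (0:ℝ)..t, (Real.exp s - 1)‖ ≤ |t| * Real.exp |t| * |t - 0| := h
    _ = t ^ 2 * Real.exp |t| := by
        rw [sub_zero, show |t| * Real.exp |t| * |t| = |t| * |t| * Real.exp |t| from by ring,
          abs_mul_abs_self]; ring

lemma exp_taylor3 (t : ℝ) : |Real.exp t - (1 + t + t ^ 2 / 2)| ≤ |t| ^ 3 * Real.exp |t| := by
  have i1 : IntervalIntegrable (fun s : ℝ => Real.exp s - 1) MeasureTheory.volume 0 t :=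
    (Real.continuous_exp.sub continuous_const).intervalIntegrable 0 t
  have i2 : IntervalIntegrable (fun s : ℝ => s) MeasureTheory.volume 0 t :=
    continuous_id.intervalIntegrable 0 t
  have key : Real.exp t - (1 + t + t ^ 2 / 2) = ∫ s in (0:ℝ)..t, (Real.exp s - 1 - s) := by
    rw [intervalIntegral.integral_sub i1 i2,
      intervalIntegral.integral_sub (Real.continuous_exp.intervalIntegrable 0 t)
        (intervalIntegrable_const), integral_exp, intervalIntegral.integral_const,
      integral_id]
    simp; ring
  have bound : ∀ x ∈ Set.uIoc (0:ℝ) t, ‖Real.exp x - 1 - x‖ ≤ t ^ 2 * Real.exp |t| := by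
    intro s hs
    have h2 := abs_le_of_mem_uIoc hs
    calc ‖Real.exp s - 1 - s‖ ≤ s ^ 2 * Real.exp |s| := exp_taylor2 s
      _ ≤ t ^ 2 * Real.exp |t| := by
          apply mul_le_mul _ (Real.exp_le_exp.2 h2) (Real.exp_pos _).le (sq_nonneg _)
          calc s ^ 2 = |s| ^ 2 := (sq_abs s).symm
            _ ≤ |t| ^ 2 := by gcongr
            _ = t ^ 2 := sq_abs t
  have h := intervalIntegral.norm_integral_le_of_norm_le_const bound
  rw [key, ← Real.norm_eq_abs]
  calc ‖∫ s in (0:ℝ)..t, (Real.exp s - 1 - s)‖ ≤ t ^ 2 * Real.exp |t| * |t - 0| := h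
    _ = |t| ^ 3 * Real.exp |t| := by
        rw [sub_zero, show t ^ 2 * Real.exp |t| * |t| = t ^ 2 * |t| * Real.exp |t| from by ring,
          ← sq_abs t, show |t| ^ 2 * |t| = |t| ^ 3 from by ring]


lemma quad_le_exp (y : ℝ) (hy : 0 ≤ y) : y ^ 2 ≤ 4 * Real.exp y := by
  have h1 := Real.add_one_le_exp (y / 2)
  have h2 : Real.exp (y / 2) * Real.exp (y / 2) = Real.exp y := by
    rw [← Real.exp_add]; ring_nf
  nlinarith [Real.exp_pos (y / 2)]

lemma exp_dominate (K r t : ℝ) (hK : 0 < K) (hr : 0 < r) (ht : 0 ≤ t) :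
    K * Real.exp (-(r * t)) * (3 * t ^ 2) ≤ 48 * K / r ^ 2 * Real.exp (-(r / 2) * t) := by
  have hq := quad_le_exp (r / 2 * t) (by positivity)
  have hid : Real.exp (r / 2 * t) * Real.exp (-(r * t)) = Real.exp (-(r / 2) * t) := by
    rw [← Real.exp_add]; ring_nf
  have hmul := mul_le_mul_of_nonneg_right hq (Real.exp_pos (-(r * t))).le
  have h16 : r ^ 2 * (t ^ 2 * Real.exp (-(r * t))) ≤ 16 * Real.exp (-(r / 2) * t) := by
    nlinarith [hmul, hid]
  have hr2 : (0:ℝ) < r ^ 2 := by positivity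
  calc K * Real.exp (-(r * t)) * (3 * t ^ 2)
      = 3 * K * (r ^ 2 * (t ^ 2 * Real.exp (-(r * t)))) / r ^ 2 := by field_simp
    _ ≤ 3 * K * (16 * Real.exp (-(r / 2) * t)) / r ^ 2 := by
        gcongr
    _ = 48 * K / r ^ 2 * Real.exp (-(r / 2) * t) := by ring

lemma third_moment_bound {Ω : Type} [MeasurableSpace Ω] (P : Measure Ω) [IsProbabilityMeasure P]
    (X : Ω → ℝ) (σ c K : ℝ) (hmeas : Measurable X) (hc : 0 < c) (hK : 0 < K) (hσ : 0 < σ)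
    (hX3int : Integrable (fun ω => |X ω| ^ 3) P)
    (htail : ∀ s : ℝ, 0 < s → P {ω | s < |X ω|} ≤ ENNReal.ofReal (K * Real.exp (-c * s / σ))) :
    ∫ ω, |X ω| ^ 3 ∂P ≤ 6 * K / c ^ 3 * σ ^ 3 := by
  set r0 : ℝ := c / σ with hr0def
  have hr0 : 0 < r0 := div_pos hc hσ
  set h : ℝ → ℝ := fun t => K * Real.exp (-(r0 * t)) * (3 * t ^ 2) with hdef
  have hcont : Continuous h := by fun_prop
  have hint : IntegrableOn h (Ioi (0:ℝ)) volume := by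
    have base : IntegrableOn (fun t : ℝ => Real.exp (-(r0 / 2) * t)) (Ioi 0) volume :=
      exp_neg_integrableOn_Ioi 0 (by positivity)
    refine ((base.const_mul (48 * K / r0 ^ 2)).mono' hcont.aestronglyMeasurable.restrict ?_)
    filter_upwards [ae_restrict_mem measurableSet_Ioi] with t ht
    have hnn : 0 ≤ h t := by
      show (0:ℝ) ≤ K * Real.exp (-(r0 * t)) * (3 * t ^ 2); positivity
    rw [Real.norm_eq_abs, abs_of_nonneg hnn]
    exact exp_dominate K r0 t hK hr0 (le_of_lt ht)
  -- layer cake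
  have m3nn : (0:ℝ) ≤ ∫ ω, |X ω| ^ 3 ∂P := integral_nonneg fun ω => by positivity
  have hkeyint : ∀ a : ℝ, (∫ t in (0:ℝ)..a, 3 * t ^ 2) = a ^ 3 := by
    intro a
    rw [intervalIntegral.integral_const_mul, integral_pow]
    ring
  have step1 : ENNReal.ofReal (∫ ω, |X ω| ^ 3 ∂P) = ∫⁻ ω, ENNReal.ofReal (|X ω| ^ 3) ∂P :=
    ofReal_integral_eq_lintegral_ofReal hX3int (Filter.Eventually.of_forall fun ω => by positivity)
  have step3 : ∫⁻ ω, ENNReal.ofReal (|X ω| ^ 3) ∂P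
      = ∫⁻ t in Ioi (0:ℝ), P {a | t < |X a|} * ENNReal.ofReal (3 * t ^ 2) := by
    rw [show (fun ω => ENNReal.ofReal (|X ω| ^ 3))
        = fun ω => ENNReal.ofReal (∫ t in (0:ℝ)..|X ω|, 3 * t ^ 2) from
      funext fun ω => by rw [hkeyint]]
    exact lintegral_comp_eq_lintegral_meas_lt_mul P
      (Filter.Eventually.of_forall fun ω => abs_nonneg _)
      (hmeas.abs.aemeasurable)
      (fun t _ => ((continuous_const.mul (continuous_pow 2)).intervalIntegrable 0 t))
      (Filter.Eventually.of_forall fun t => by positivity)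
  have step4 : ∫⁻ t in Ioi (0:ℝ), P {a | t < |X a|} * ENNReal.ofReal (3 * t ^ 2)
      ≤ ∫⁻ t in Ioi (0:ℝ), ENNReal.ofReal (h t) := by
    refine lintegral_mono_ae ?_
    filter_upwards [ae_restrict_mem measurableSet_Ioi] with t ht
    have h1 := htail t ht
    have heq : K * Real.exp (-c * t / σ) * (3 * t ^ 2) = h t := by
      show _ = K * Real.exp (-(r0 * t)) * (3 * t ^ 2)
      rw [show -c * t / σ = -(r0 * t) from by rw [hr0def]; ring]
    calc P {a | t < |X a|} * ENNReal.ofReal (3 * t ^ 2)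
        ≤ ENNReal.ofReal (K * Real.exp (-c * t / σ)) * ENNReal.ofReal (3 * t ^ 2) :=
          mul_le_mul_left h1 _
      _ = ENNReal.ofReal (h t) := by
          rw [← ENNReal.ofReal_mul (by positivity), heq]
  have step5 : ∫⁻ t in Ioi (0:ℝ), ENNReal.ofReal (h t)
      = ENNReal.ofReal (∫ t in Ioi (0:ℝ), h t) :=
    (ofReal_integral_eq_lintegral_ofReal hint
      ((ae_restrict_iff' measurableSet_Ioi).2 (Filter.Eventually.of_forall fun t _ => by
        show (0:ℝ) ≤ K * Real.exp (-(r0 * t)) * (3 * t ^ 2); positivity))).symm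
  have hval : (∫ t in Ioi (0:ℝ), h t) = 6 * K / c ^ 3 * σ ^ 3 := by
    have e1 : (∫ t in Ioi (0:ℝ), h t) = (3 * K) * ∫ t in Ioi (0:ℝ), t ^ ((3:ℝ) - 1) * Real.exp (-(r0 * t)) := by
      rw [← integral_const_mul]
      refine setIntegral_congr_fun measurableSet_Ioi fun t ht => ?_
      have : t ^ ((3:ℝ) - 1) = t ^ (2:ℕ) := by
        rw [show (3:ℝ) - 1 = ((2:ℕ):ℝ) by norm_num, Real.rpow_natCast]
      show K * Real.exp (-(r0 * t)) * (3 * t ^ 2) = 3 * K * (t ^ ((3:ℝ) - 1) * Real.exp (-(r0 * t)))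
      rw [this]; ring
    rw [e1, Real.integral_rpow_mul_exp_neg_mul_Ioi (by norm_num : (0:ℝ) < 3) hr0]
    have hG : Real.Gamma 3 = 2 := by
      rw [show (3:ℝ) = ((2:ℕ):ℝ) + 1 by norm_num, Real.Gamma_nat_eq_factorial]
      norm_num
    have hrp : ((1:ℝ)/r0) ^ (3:ℝ) = (1/r0) ^ (3:ℕ) := by
      rw [← Real.rpow_natCast]; norm_num
    rw [hG, hrp, hr0def]
    field_simp
    ring
  have : ENNReal.ofReal (∫ ω, |X ω| ^ 3 ∂P) ≤ ENNReal.ofReal (6 * K / c ^ 3 * σ ^ 3) := by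
    rw [step1, step3, ← hval, ← step5]; exact step4
  exact (ENNReal.ofReal_le_ofReal_iff (by positivity)).1 this

set_option maxHeartbeats 1000000 in
/-- If `X` is bounded by 1, has standard deviation `σ ≤ 1`, mean `-μ₀σ² + O(σ³)`, exponential
tails at scale `σ`, and `μ > 0` bounded satisfies `𝔼[e^{2μX}] = 1`, then `μ = μ₀ + O(σ)`. -/
theorem exponential_moment_root_expansion (μ₀ c K C₀ A : ℝ)
    (hμ₀ : 0 < μ₀) (hc : 0 < c) (hK : 0 < K) (hC₀ : 0 < C₀) (hA : 0 < A) :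
    ∃ D : ℝ, 0 < D ∧
      ∀ (Ω : Type) [MeasurableSpace Ω] (P : Measure Ω) [IsProbabilityMeasure P]
        (X : Ω → ℝ) (σ μ : ℝ),
        Measurable X →
        (∀ᵐ ω ∂P, |X ω| ≤ 1) →
        σ = Real.sqrt (∫ ω, X ω ^ 2 ∂P) →
        0 < σ → σ ≤ 1 →
        |(∫ ω, X ω ∂P) + μ₀ * σ ^ 2| ≤ A * σ ^ 3 →
        (∀ s : ℝ, 0 < s → P {ω | s < |X ω|} ≤ ENNReal.ofReal (K * Real.exp (-c * s / σ))) →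
        0 < μ → μ ≤ C₀ →
        (∫ ω, Real.exp (2 * μ * X ω) ∂P) = 1 →
        |μ - μ₀| ≤ D * σ := by
  set E : ℝ := Real.exp (2 * C₀) with hEdef
  have hE : 0 < E := Real.exp_pos _
  refine ⟨24 * K * C₀ ^ 2 * E / c ^ 3 + A, by positivity, ?_⟩
  intro Ω _ P _ X σ μ hmeas hX1 hσdef hσpos hσ1 hmean htail hμpos hμC₀ hexp
  -- basic integrabilities
  have boundedInt : ∀ (f : Ω → ℝ) (C : ℝ), Measurable f → (∀ᵐ ω ∂P, |f ω| ≤ C) → Integrable f P :=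
    fun f C hf hb => (integrable_const C).mono' hf.aestronglyMeasurable
      (by simpa [Real.norm_eq_abs] using hb)
  have hXint : Integrable X P := boundedInt X 1 hmeas hX1
  have hX2int : Integrable (fun ω => X ω ^ 2) P := by
    refine boundedInt _ 1 (hmeas.pow_const 2) ?_
    filter_upwards [hX1] with ω hω
    calc |X ω ^ 2| = |X ω| ^ 2 := by rw [abs_pow]
      _ ≤ 1 := pow_le_one₀ (abs_nonneg _) hω
  have hX3int : Integrable (fun ω => |X ω| ^ 3) P := by
    refine boundedInt _ 1 (hmeas.abs.pow_const 3) ?_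
    filter_upwards [hX1] with ω hω
    calc |(|X ω| ^ 3)| = |X ω| ^ 3 := abs_of_nonneg (by positivity)
      _ ≤ 1 := pow_le_one₀ (abs_nonneg _) hω
  have hexpbd : ∀ᵐ ω ∂P, |Real.exp (2 * μ * X ω)| ≤ E := by
    filter_upwards [hX1] with ω hω
    rw [abs_of_pos (Real.exp_pos _), hEdef, Real.exp_le_exp]
    have : 2 * μ * X ω ≤ 2 * μ * |X ω| := by
      nlinarith [le_abs_self (X ω)]
    nlinarith [abs_nonneg (X ω)]
  have hexpint : Integrable (fun ω => Real.exp (2 * μ * X ω)) P :=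
    boundedInt _ E ((hmeas.const_mul _).exp) hexpbd
  -- σ² equals the second moment
  have hs2nn : (0:ℝ) ≤ ∫ ω, X ω ^ 2 ∂P := integral_nonneg fun ω => sq_nonneg _
  have hσ2 : σ ^ 2 = ∫ ω, X ω ^ 2 ∂P := by rw [hσdef]; exact Real.sq_sqrt hs2nn
  -- third moment bound
  have hm3 : ∫ ω, |X ω| ^ 3 ∂P ≤ 6 * K / c ^ 3 * σ ^ 3 :=
    third_moment_bound P X σ c K hmeas hc hK hσpos hX3int htail
  have hm3nn : (0:ℝ) ≤ ∫ ω, |X ω| ^ 3 ∂P := integral_nonneg fun ω => by positivity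
  -- the remainder
  set r : Ω → ℝ := fun ω => Real.exp (2 * μ * X ω) - 1 - 2 * μ * X ω - 2 * μ ^ 2 * X ω ^ 2
    with hrdef
  have int1 : Integrable (fun ω => Real.exp (2 * μ * X ω) - 1) P :=
    hexpint.sub (integrable_const 1)
  have int2 : Integrable (fun ω => Real.exp (2 * μ * X ω) - 1 - 2 * μ * X ω) P :=
    int1.sub (hXint.const_mul (2 * μ))
  have hrint : Integrable r P := int2.sub (hX2int.const_mul (2 * μ ^ 2))
  have hrbound : ∀ᵐ ω ∂P, |r ω| ≤ 8 * μ ^ 3 * E * |X ω| ^ 3 := by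
    filter_upwards [hX1] with ω hω
    have ht3 := exp_taylor3 (2 * μ * X ω)
    have hre : r ω = Real.exp (2 * μ * X ω) -
        (1 + 2 * μ * X ω + (2 * μ * X ω) ^ 2 / 2) := by
      show Real.exp (2 * μ * X ω) - 1 - 2 * μ * X ω - 2 * μ ^ 2 * X ω ^ 2 = _
      ring
    have habs : |2 * μ * X ω| = 2 * μ * |X ω| := by
      rw [abs_mul, abs_of_pos (by positivity : (0:ℝ) < 2 * μ)]
    have hexple : Real.exp |2 * μ * X ω| ≤ E := by
      rw [habs, hEdef, Real.exp_le_exp]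
      nlinarith [abs_nonneg (X ω)]
    calc |r ω| = |Real.exp (2 * μ * X ω) - (1 + 2 * μ * X ω + (2 * μ * X ω) ^ 2 / 2)| := by
          rw [hre]
      _ ≤ |2 * μ * X ω| ^ 3 * Real.exp |2 * μ * X ω| := ht3
      _ ≤ |2 * μ * X ω| ^ 3 * E := by
          have : (0:ℝ) ≤ |2 * μ * X ω| ^ 3 := by positivity
          nlinarith
      _ = 8 * μ ^ 3 * E * |X ω| ^ 3 := by rw [habs]; ring
  -- integral of the remainder
  have hrint_eq : ∫ ω, r ω ∂P = -(2 * μ * (∫ ω, X ω ∂P) + 2 * μ ^ 2 * (σ ^ 2)) := by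
    have : ∫ ω, r ω ∂P = (∫ ω, Real.exp (2 * μ * X ω) ∂P) - (∫ _ω, (1:ℝ) ∂P)
        - (2 * μ) * (∫ ω, X ω ∂P) - (2 * μ ^ 2) * (∫ ω, X ω ^ 2 ∂P) := by
      simp only [hrdef]
      rw [integral_sub int2 (hX2int.const_mul (2 * μ ^ 2)),
        integral_sub int1 (hXint.const_mul (2 * μ)),
        integral_sub hexpint (integrable_const 1), integral_const_mul, integral_const_mul]
    rw [this, hexp, hσ2]
    simp
    ring
  have habs1 : |2 * μ * (∫ ω, X ω ∂P) + 2 * μ ^ 2 * σ ^ 2| ≤ 8 * μ ^ 3 * E * (6 * K / c ^ 3 * σ ^ 3) := by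
    have h1 : |∫ ω, r ω ∂P| ≤ ∫ ω, |r ω| ∂P := by
      simpa [Real.norm_eq_abs] using norm_integral_le_integral_norm (μ := P) r
    have h2 : ∫ ω, |r ω| ∂P ≤ ∫ ω, 8 * μ ^ 3 * E * |X ω| ^ 3 ∂P :=
      integral_mono_ae hrint.abs (hX3int.const_mul _) hrbound
    have h3 : ∫ ω, 8 * μ ^ 3 * E * |X ω| ^ 3 ∂P = 8 * μ ^ 3 * E * ∫ ω, |X ω| ^ 3 ∂P :=
      integral_const_mul _ _
    have h4 : 8 * μ ^ 3 * E * (∫ ω, |X ω| ^ 3 ∂P) ≤ 8 * μ ^ 3 * E * (6 * K / c ^ 3 * σ ^ 3) := by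
      have : (0:ℝ) ≤ 8 * μ ^ 3 * E := by positivity
      nlinarith
    calc |2 * μ * (∫ ω, X ω ∂P) + 2 * μ ^ 2 * σ ^ 2| = |∫ ω, r ω ∂P| := by
          rw [hrint_eq, abs_neg]
      _ ≤ _ := by rw [h3] at h2; linarith
  -- divide by 2μ
  have habs2 : |(∫ ω, X ω ∂P) + μ * σ ^ 2| ≤ 4 * μ ^ 2 * E * (6 * K / c ^ 3 * σ ^ 3) := by
    have hrw : 2 * μ * (∫ ω, X ω ∂P) + 2 * μ ^ 2 * σ ^ 2
        = (2 * μ) * ((∫ ω, X ω ∂P) + μ * σ ^ 2) := by ring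
    rw [hrw, abs_mul, abs_of_pos (by positivity : (0:ℝ) < 2 * μ)] at habs1
    have h2μ : (0:ℝ) < 2 * μ := by positivity
    have := (mul_le_mul_iff_right₀ h2μ).1 (le_of_le_of_eq habs1
      (by ring : 8 * μ ^ 3 * E * (6 * K / c ^ 3 * σ ^ 3)
        = (2 * μ) * (4 * μ ^ 2 * E * (6 * K / c ^ 3 * σ ^ 3))))
    exact this
  -- conclude
  have hfinal : |μ - μ₀| * σ ^ 2 ≤ (24 * K * C₀ ^ 2 * E / c ^ 3 + A) * σ ^ 3 := by
    have hdiff : (μ - μ₀) * σ ^ 2 = ((∫ ω, X ω ∂P) + μ * σ ^ 2)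
        - ((∫ ω, X ω ∂P) + μ₀ * σ ^ 2) := by ring
    have hb2 : 4 * μ ^ 2 * E * (6 * K / c ^ 3 * σ ^ 3) ≤ 24 * K * C₀ ^ 2 * E / c ^ 3 * σ ^ 3 := by
      have hμ2 : μ ^ 2 ≤ C₀ ^ 2 := by nlinarith
      have : (0:ℝ) ≤ 24 * K / c ^ 3 * E * σ ^ 3 := by positivity
      have hc3 : (0:ℝ) < c ^ 3 := by positivity
      rw [show 4 * μ ^ 2 * E * (6 * K / c ^ 3 * σ ^ 3) = μ ^ 2 * (24 * K / c ^ 3 * E * σ ^ 3) from by ring,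
        show 24 * K * C₀ ^ 2 * E / c ^ 3 * σ ^ 3 = C₀ ^ 2 * (24 * K / c ^ 3 * E * σ ^ 3) from by ring]
      nlinarith
    calc |μ - μ₀| * σ ^ 2 = |(μ - μ₀) * σ ^ 2| := by
          rw [abs_mul, abs_of_nonneg (sq_nonneg σ)]
      _ = |((∫ ω, X ω ∂P) + μ * σ ^ 2) - ((∫ ω, X ω ∂P) + μ₀ * σ ^ 2)| := by rw [hdiff]
      _ ≤ |(∫ ω, X ω ∂P) + μ * σ ^ 2| + |(∫ ω, X ω ∂P) + μ₀ * σ ^ 2| := abs_sub _ _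
      _ ≤ 4 * μ ^ 2 * E * (6 * K / c ^ 3 * σ ^ 3) + A * σ ^ 3 := add_le_add habs2 hmean
      _ ≤ 24 * K * C₀ ^ 2 * E / c ^ 3 * σ ^ 3 + A * σ ^ 3 := by linarith
      _ = (24 * K * C₀ ^ 2 * E / c ^ 3 + A) * σ ^ 3 := by ring
  have hσ2pos : (0:ℝ) < σ ^ 2 := by positivity
  have := (mul_le_mul_iff_left₀ hσ2pos).1 (le_of_le_of_eq hfinal
    (by ring : (24 * K * C₀ ^ 2 * E / c ^ 3 + A) * σ ^ 3
      = (24 * K * C₀ ^ 2 * E / c ^ 3 + A) * σ * σ ^ 2))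
  exact this
end
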